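/- Let p ≠ q be points in the plane, let x be a point of the open segment (p, q), let H⁻ and H⁺ be the two open halfplanes bounded by line pq, and let z ∈ H⁺. Then there exists δ > 0 such that for every r ∈ H⁻ with ‖r − x‖ < δ, the point z lies in the open interior of the circumdisc of p, q, r. -/

import Mathlib

noncomputable section

/-- Points of the Euclidean plane. -/
abbrev Pt := EuclideanSpace ℝ (Fin 2)

/-- The orientation (cross product) determinant of the triple `(p, q, r)`. -/
def orient (p q r : Pt) : ℝ :=
  (q 0 - p 0) * (r 1 - p 1) - (q 1 - p 1) * (r 0 - p 0)

/-- Let `x` be a point of the open segment `(p, q)` and let `z` lie in the open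
halfplane `H⁺ = {orient p q · > 0}`.  Then for every point `r` of the opposite open
halfplane `H⁻` close enough to `x`, the point `z` lies in the open interior of the
circumdisc of `p, q, r`. -/
theorem stmt11 (p q x z : Pt) (hpq : p ≠ q)
    (hx : x ∈ openSegment ℝ p q) (hz : 0 < orient p q z) :
    ∃ δ > 0, ∀ r : Pt, orient p q r < 0 → dist r x < δ →
      ∃ c : Pt, ∃ ρ : ℝ,
        dist p c = ρ ∧ dist q c = ρ ∧ dist r c = ρ ∧ dist z c < ρ := by
  obtain ⟨a, b, ha, hb, hab, hxab⟩ := hx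
  have hb1 : b = 1 - a := by linarith
  have ha1 : a < 1 := by linarith
  set n : Pt := (WithLp.equiv 2 (Fin 2 → ℝ)).symm ![-(q 1 - p 1), q 0 - p 0] with hn
  have hmval : midpoint ℝ p q = (2⁻¹ : ℝ) • (p + q) := by
    rw [midpoint_eq_smul_add, invOf_eq_inv]
  set m : Pt := midpoint ℝ p q with hm
  set L : ℝ := ‖q - p‖ with hLdef
  have hL : 0 < L := norm_sub_pos_iff.mpr (Ne.symm hpq)
  have hN : ‖n‖ = L := by
    rw [hn, hLdef]
    simp [EuclideanSpace.norm_eq, Fin.sum_univ_two]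
    ring_nf
  -- inner product identity
  have hipm : ∀ w : Pt, (inner ℝ (w - m) n : ℝ) = orient p q w := by
    intro w
    rw [hmval]
    simp [hn, PiLp.inner_apply, Fin.sum_univ_two, orient]
    ring
  clear_value n m L
  have hop : orient p q p = 0 := by unfold orient; ring
  have hoq : orient p q q = 0 := by unfold orient; ring
  have hpm : p - m = (-(2⁻¹ : ℝ)) • (q - p) := by rw [hmval]; module
  have hqm : q - m = ((2⁻¹ : ℝ)) • (q - p) := by rw [hmval]; module
  have hxm : x - m = ((a : ℝ) - 2⁻¹) • (p - q) := by
    rw [← hxab, hb1, hmval]; module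
  have hPQ : ‖q - m‖ = ‖p - m‖ := by
    rw [hpm, hqm, neg_smul, norm_neg]
  have hXP : ‖x - m‖ < ‖p - m‖ := by
    rw [hxm, hpm, neg_smul, norm_neg, norm_smul, norm_smul,
      Real.norm_eq_abs, Real.norm_eq_abs, show (p - q) = -(q - p) by module, norm_neg]
    have h1 : |a - 2⁻¹| < |(2⁻¹ : ℝ)| := by
      rw [abs_of_pos (by norm_num : (0:ℝ) < 2⁻¹), abs_lt]
      constructor <;> linarith
    rw [← hLdef]
    exact mul_lt_mul_of_pos_right h1 hL
  have hox : orient p q x = 0 := by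
    rw [← hipm x, hxm, real_inner_smul_left,
      show p - q = (p - m) - (q - m) by module, inner_sub_left, hipm, hipm, hop, hoq]
    ring
  have horx : ∀ r : Pt, orient p q r = (inner ℝ (r - x) n : ℝ) := by
    intro r
    rw [show r - x = (r - m) - (x - m) by module, inner_sub_left, hipm, hipm, hox]
    ring
  -- distance formula for points on the perpendicular bisector line
  have hdist : ∀ (t : ℝ) (w : Pt), dist w (m + t • n) ^ 2
      = ‖w - m‖ ^ 2 - 2 * t * orient p q w + t ^ 2 * L ^ 2 := by
    intro t w
    rw [dist_eq_norm, show w - (m + t • n) = (w - m) - t • n by module,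
      norm_sub_sq_real, real_inner_smul_right, hipm w, norm_smul, hN]
    simp [Real.norm_eq_abs, mul_pow, sq_abs]
    ring
  have hsq : ∀ {A B : ℝ}, 0 ≤ A → 0 ≤ B → A ^ 2 = B ^ 2 → A = B := by
    intro A B hA hB h
    rw [← Real.sqrt_sq hA, ← Real.sqrt_sq hB, h]
  have hX0 : (0:ℝ) ≤ ‖x - m‖ := norm_nonneg _
  have hA : 0 < ‖p - m‖ ^ 2 - ‖x - m‖ ^ 2 := by
    have hprod : 0 < (‖p - m‖ - ‖x - m‖) * (‖p - m‖ + ‖x - m‖) :=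
      mul_pos (by linarith) (by linarith)
    nlinarith [hprod]
  set X : ℝ := ‖x - m‖ with hXdef
  set P : ℝ := ‖p - m‖ with hPdef
  clear_value X P
  set A : ℝ := P ^ 2 - X ^ 2 with hAdef
  set oz : ℝ := orient p q z with hozdef
  set Bz : ℝ := ‖z - m‖ ^ 2 - P ^ 2 with hBzdef
  clear_value oz Bz A
  set δ₁ : ℝ := min 1 (A / (2 * (2 * X + 1))) with hδ₁def
  set δ₂ : ℝ := (A * oz) / (2 * L * (|Bz| + 1)) with hδ₂def
  have hden : (0:ℝ) < 2 * (2 * X + 1) := by linarith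
  have habs : (0:ℝ) ≤ |Bz| := abs_nonneg _
  have hden2 : (0:ℝ) < 2 * L * (|Bz| + 1) := by
    have := mul_pos hL (show (0:ℝ) < |Bz| + 1 by linarith)
    linarith
  have hδ₁ : 0 < δ₁ := lt_min one_pos (div_pos hA hden)
  have hδ₂ : 0 < δ₂ := div_pos (mul_pos hA hz) hden2
  clear_value δ₁ δ₂
  refine ⟨min δ₁ δ₂, lt_min hδ₁ hδ₂, ?_⟩
  intro r hro hrd
  set d : ℝ := dist r x with hddef
  clear_value d
  have hd0 : 0 ≤ d := hddef ▸ dist_nonneg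
  have hd1 : d < δ₁ := lt_of_lt_of_le hrd (min_le_left _ _)
  have hd2 : d < δ₂ := lt_of_lt_of_le hrd (min_le_right _ _)
  rw [hδ₁def] at hd1
  have hd1' : d < 1 := lt_of_lt_of_le hd1 (min_le_left _ _)
  have hd1'' : d < A / (2 * (2 * X + 1)) := lt_of_lt_of_le hd1 (min_le_right _ _)
  -- bound on the numerator
  have hrm : ‖r - m‖ ≤ d + X := by
    rw [hddef, dist_eq_norm, hXdef]
    calc ‖r - m‖ = ‖(r - x) + (x - m)‖ := by rw [show r - m = (r - x) + (x - m) by module]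
    _ ≤ ‖r - x‖ + ‖x - m‖ := norm_add_le _ _
  have hnum : ‖r - m‖ ^ 2 - P ^ 2 < -(A / 2) := by
    have h2 : d * (2 * (2 * X + 1)) < A := (lt_div_iff₀ hden).mp hd1''
    have h3 : ‖r - m‖ * ‖r - m‖ ≤ (d + X) * (d + X) :=
      mul_self_le_mul_self (norm_nonneg _) hrm
    have h4 : d * d ≤ d * 1 := mul_le_mul_of_nonneg_left (le_of_lt hd1') hd0
    linarith only [h2, h3, h4, hAdef]
  -- bound on the orientation of r
  have hOr : -orient p q r ≤ d * L := by
    have h1 : |orient p q r| ≤ ‖r - x‖ * ‖n‖ := by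
      rw [horx r]; exact abs_real_inner_le_norm _ _
    rw [hN, ← dist_eq_norm, ← hddef] at h1
    have := abs_le.mp h1
    linarith [this.1]
  -- the circumcenter parameter
  set t : ℝ := (‖r - m‖ ^ 2 - P ^ 2) / (2 * orient p q r) with htdef
  clear_value t
  have hOrne : (2 : ℝ) * orient p q r ≠ 0 := by
    intro h; linarith
  have htv : t * (2 * orient p q r) = ‖r - m‖ ^ 2 - P ^ 2 := by
    rw [htdef]; exact div_mul_cancel₀ _ hOrne
  have ht0 : 0 < t := by
    rw [htdef]
    apply div_pos_of_neg_of_neg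
    · linarith
    · linarith
  -- the key inequality : z strictly inside the circumdisc
  have hkey : Bz < 2 * t * oz := by
    set u : ℝ := -(‖r - m‖ ^ 2 - P ^ 2) with hudef
    set v : ℝ := -(2 * orient p q r) with hvdef
    have hu : A / 2 < u := by rw [hudef]; linarith
    have hv : 0 < v := by rw [hvdef]; linarith
    have h2dL : (0:ℝ) < 2 * δ₂ * L := by
      have := mul_pos (mul_pos (show (0:ℝ) < 2 by norm_num) hδ₂) hL
      linarith
    have hvb : v < 2 * δ₂ * L := by
      rw [hvdef]
      have hd2L : d * L < δ₂ * L := mul_lt_mul_of_pos_right hd2 hL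
      have := hOr
      linarith
    have htuv : t * v = u := by rw [hudef, hvdef]; linarith [htv]
    have h5 : t * v < t * (2 * δ₂ * L) := mul_lt_mul_of_pos_left hvb ht0
    have h6 : A / 2 < t * (2 * δ₂ * L) := by rw [← htuv] at hu; linarith
    have hδ₂eq : δ₂ * (2 * L * (|Bz| + 1)) = A * oz := by
      rw [hδ₂def]; field_simp
    have ht' : (A / 2) / (2 * δ₂ * L) < t := (div_lt_iff₀ h2dL).mpr h6
    have hval : (A / 2) / (2 * δ₂ * L) * (2 * oz) = |Bz| + 1 := by
      rw [div_mul_eq_mul_div, div_eq_iff (ne_of_gt h2dL)]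
      linear_combination -hδ₂eq
    have h8 : (A / 2) / (2 * δ₂ * L) * (2 * oz) < t * (2 * oz) :=
      mul_lt_mul_of_pos_right ht' (by linarith)
    have hBabs : Bz ≤ |Bz| := le_abs_self _
    rw [hval] at h8
    linarith
  -- assemble
  refine ⟨m + t • n, dist p (m + t • n), rfl, ?_, ?_, ?_⟩
  · apply hsq dist_nonneg dist_nonneg
    rw [hdist t q, hdist t p, hoq, hop, hPQ, hPdef]
  · apply hsq dist_nonneg dist_nonneg
    rw [hdist t r, hdist t p, hop]
    have h9 : 2 * t * orient p q r = ‖r - m‖ ^ 2 - P ^ 2 := by linarith [htv]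
    rw [h9, hPdef]
    ring
  · apply lt_of_pow_lt_pow_left₀ 2 dist_nonneg
    rw [hdist t z, hdist t p, hop]
    rw [hBzdef] at hkey
    rw [hozdef] at hkey
    rw [hPdef] at hkey
    linarith
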